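/- Let C_{K,n} = (K/(n+K))·binom(2n+K-1, n) for n ≥ 0 and C_{K,n} = 0 for n < 0, and define D_{K,M}(N) = det((C_{K,i+j+M})_{i,j=0}^{N-1}) with D_{K,M}(0) = 1. Then for every positive integer k: D_{2k+1,1-k}((2k+1)·n) = (-1)^{k·n} and D_{2k+1,1-k}((2k+1)·n + k) = (-1)^{k·n + binom(k,2)} for all natural numbers n, and D_{2k+1,1-k}(N) = 0 for every other positive integer N (i.e. all N not of either of these two forms). -/

import Mathlib

open PowerSeries Finset

noncomputable def catQ : ℚ⟦X⟧ := PowerSeries.mk fun n => (catalan n : ℚ)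

lemma catQ_eq : X * catQ ^ 2 = catQ - 1 := by
  ext n
  cases n with
  | zero => simp [catQ]
  | succ n =>
    rw [coeff_succ_X_mul, pow_two, coeff_mul, map_sub]
    simp only [catQ, coeff_mk, coeff_one, Nat.succ_ne_zero, if_false, sub_zero,
      catalan_succ' n]
    push_cast
    rfl

lemma catQ_unit : (1 - X * catQ) * catQ = 1 := by
  have h := catQ_eq
  linear_combination -h

lemma Ysq : (X * catQ) ^ 2 = X * catQ - X := by
  have h := catQ_eq
  linear_combination X * h

lemma Zsq : (1 - X * catQ) ^ 2 = (1 - X * catQ) - X := by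
  have h := catQ_eq
  linear_combination X * h

lemma coeff_pow_add_pow : ∀ m n : ℕ, m < 2 * n →
    (coeff n) ((X * catQ) ^ m + (1 - X * catQ) ^ m) = 0 := by
  intro m
  induction m using Nat.strong_induction_on with
  | _ m ih =>
    match m with
    | 0 => intro n h
           have hn : n ≠ 0 := by omega
           simp [coeff_one, hn]
    | 1 => intro n h
           have hn : n ≠ 0 := by omega
           have : (X * catQ) ^ 1 + (1 - X * catQ) ^ 1 = 1 := by ring
           rw [this, coeff_one, if_neg hn]
    | (m+2) =>
      intro n h
      obtain ⟨n', rfl⟩ : ∃ n', n = n' + 1 := ⟨n - 1, by omega⟩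
      have e : (X * catQ) ^ (m+2) + (1 - X * catQ) ^ (m+2) =
          ((X * catQ) ^ (m+1) + (1 - X * catQ) ^ (m+1))
            - X * ((X * catQ) ^ m + (1 - X * catQ) ^ m) := by
        have h1 : (X*catQ)^(m+2) = (X*catQ)^m * ((X*catQ) - X) := by
          rw [← Ysq]; ring
        have h2 : (1 - X*catQ)^(m+2) = (1 - X*catQ)^m * ((1 - X*catQ) - X) := by
          rw [← Zsq]; ring
        rw [h1, h2]; ring
      rw [e, map_sub, coeff_succ_X_mul]
      rw [ih (m+1) (by omega) (n'+1) (by omega), ih m (by omega) n' (by omega)]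
      ring

/-- The convolution powers of the Catalan numbers:
`C_{K,n} = (K/(n+K))·binom(2n+K-1, n)` for `n ≥ 0`, and `C_{K,n} = 0` for `n < 0`. -/
noncomputable def Ccat (K : ℕ) (n : ℤ) : ℚ :=
  if 0 ≤ n then ((K : ℚ) / ((n : ℚ) + (K : ℚ))) * ((2 * n.toNat + K - 1).choose n.toNat)
  else 0

lemma Ccat_neg (K : ℕ) (n : ℤ) (h : n < 0) : Ccat K n = 0 := by
  simp [Ccat, not_le.mpr h]

lemma Ccat_zero (K : ℕ) (hK : 1 ≤ K) : Ccat K 0 = 1 := by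
  have hKQ : (K:ℚ) ≠ 0 := Nat.cast_ne_zero.mpr (by omega)
  simp [Ccat, hKQ]

lemma Ccat_natCast (K n : ℕ) : Ccat K (n : ℤ) =
    ((K : ℚ) / ((n : ℚ) + (K : ℚ))) * ((2 * n + K - 1).choose n) := by
  simp [Ccat, Int.toNat_natCast]

lemma Ccat_diff (K n : ℕ) : Ccat (K+1) ((n : ℤ)+1) =
    (((2*n+K+2).choose (n+1) : ℚ)) - (((2*n+K+2).choose n : ℚ)) := by
  have h1 : ((n : ℤ) + 1) = ((n+1 : ℕ) : ℤ) := by push_cast; ring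
  rw [h1, Ccat_natCast]
  have h2 : 2 * (n+1) + (K+1) - 1 = 2*n+K+2 := by omega
  rw [h2]
  have hc := Nat.choose_succ_right_eq (2*n+K+2) n
  have hsub : 2*n+K+2 - n = n+K+2 := by omega
  rw [hsub] at hc
  have hcQ : (((2*n+K+2).choose (n+1)) : ℚ) * ((n:ℚ)+1)
      = (((2*n+K+2).choose n) : ℚ) * ((n:ℚ)+K+2) := by exact_mod_cast hc
  have hne : ((n:ℚ)+1) + ((K:ℚ)+1) ≠ 0 := by positivity
  field_simp
  push_cast
  linear_combination -hcQ

lemma Ccat_one (n : ℕ) : Ccat 1 (n : ℤ) = (catalan n : ℚ) := by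
  rw [Ccat_natCast]
  have h2 : 2 * n + 1 - 1 = 2 * n := by omega
  rw [h2]
  have hc := succ_mul_catalan_eq_centralBinom n
  rw [Nat.centralBinom_eq_two_mul_choose] at hc
  have hQ : ((n:ℚ)+1) * (catalan n : ℚ) = ((2*n).choose n : ℚ) := by exact_mod_cast hc
  have hne : (n:ℚ)+1 ≠ 0 := by positivity
  push_cast
  field_simp
  linear_combination -hQ

lemma Ccat_two (n : ℕ) : Ccat 2 (n : ℤ) = Ccat 1 ((n:ℤ)+1) := by
  cases n with
  | zero =>
    simp only [Nat.cast_zero]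
    rw [Ccat_zero 2 (by omega)]
    have h := Ccat_diff 0 0
    norm_num at h ⊢
    rw [h]
  | succ m =>
    have h1 := Ccat_diff 1 m
    have h2 := Ccat_diff 0 (m+1)
    have e1 : 2*m+1+2 = 2*m+3 := by omega
    have e2 : 2*(m+1)+0+2 = 2*m+4 := by omega
    rw [e1] at h1; rw [e2] at h2
    have hcast : ((m+1 : ℕ) : ℤ) = (m:ℤ)+1 := by push_cast; ring
    rw [hcast, h1]
    have hcast2 : ((m:ℤ)+1)+1 = ((m+1 : ℕ) : ℤ)+1 := by push_cast; ring
    rw [hcast2, h2]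
    have p1 : (2*m+4).choose (m+2) = (2*m+3).choose (m+1) + (2*m+3).choose (m+2) :=
      Nat.choose_succ_succ (2*m+3) (m+1)
    have p2 : (2*m+4).choose (m+1) = (2*m+3).choose m + (2*m+3).choose (m+1) :=
      Nat.choose_succ_succ (2*m+3) m
    have sym : (2*m+3).choose (m+2) = (2*m+3).choose (m+1) := by
      have := Nat.choose_symm (n := 2*m+3) (k := m+2) (by omega)
      have e : 2*m+3 - (m+2) = m+1 := by omega
      rw [e] at this
      omega
    rw [p1, p2, sym]
    push_cast
    ring

lemma Ccat_rec (K n : ℕ) (hK : 1 ≤ K) :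
    Ccat (K+2) (n : ℤ) = Ccat (K+1) ((n:ℤ)+1) - Ccat K ((n:ℤ)+1) := by
  obtain ⟨K', rfl⟩ : ∃ K', K = K'+1 := ⟨K-1, by omega⟩
  cases n with
  | zero =>
    rw [show ((0:ℕ):ℤ) = 0 by norm_num, Ccat_zero (K'+3) (by omega)]
    have h1 := Ccat_diff (K'+1) 0
    have h2 := Ccat_diff K' 0
    norm_num at h1 h2 ⊢
    rw [h1, h2]
    ring
  | succ n =>
    have h0 := Ccat_diff (K'+2) n
    have h1 := Ccat_diff (K'+1) (n+1)
    have h2 := Ccat_diff K' (n+1)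
    have e0 : 2*n+(K'+2)+2 = 2*n+K'+4 := by omega
    have e1 : 2*(n+1)+(K'+1)+2 = 2*n+K'+5 := by omega
    have e2 : 2*(n+1)+K'+2 = 2*n+K'+4 := by omega
    rw [e0] at h0; rw [e1] at h1; rw [e2] at h2
    have hc : ((n+1:ℕ):ℤ) = (n:ℤ)+1 := by push_cast; ring
    rw [hc, h0]
    have hc2 : ((n:ℤ)+1)+1 = ((n+1:ℕ):ℤ)+1 := by push_cast; ring
    rw [hc2, h1, h2]
    have p1 : (2*n+K'+5).choose (n+2) = (2*n+K'+4).choose (n+1) + (2*n+K'+4).choose (n+2) :=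
      Nat.choose_succ_succ (2*n+K'+4) (n+1)
    have p2 : (2*n+K'+5).choose (n+1) = (2*n+K'+4).choose n + (2*n+K'+4).choose (n+1) :=
      Nat.choose_succ_succ (2*n+K'+4) n
    rw [p1, p2]
    push_cast
    ring

lemma coeff_catQ_pow : ∀ K, 1 ≤ K → ∀ n : ℕ, (coeff n) (catQ ^ K) = Ccat K (n : ℤ) := by
  intro K
  induction K using Nat.strong_induction_on with
  | _ K ih =>
    match K with
    | 0 => omega
    | 1 =>
      intro _ n
      rw [pow_one, Ccat_one]
      simp [catQ]
    | 2 =>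
      intro _ n
      have hx : X * catQ ^ 2 = catQ - 1 := catQ_eq
      have : (coeff n) (catQ ^ 2) = (coeff (n+1)) (X * catQ ^ 2) :=
        (coeff_succ_X_mul n _).symm
      rw [this, hx, map_sub, coeff_one, if_neg (Nat.succ_ne_zero n)]
      rw [Ccat_two, show ((n:ℤ)+1) = ((n+1:ℕ):ℤ) by push_cast; ring, Ccat_one]
      simp [catQ]
    | (K+3) =>
      intro _ n
      have hx : X * catQ ^ (K+3) = catQ ^ (K+2) - catQ ^ (K+1) := by
        have h := catQ_eq
        linear_combination catQ ^ (K+1) * h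
      have h1 : (coeff n) (catQ ^ (K+3)) = (coeff (n+1)) (X * catQ ^ (K+3)) :=
        (coeff_succ_X_mul n _).symm
      rw [h1, hx, map_sub, ih (K+2) (by omega) (by omega) (n+1),
        ih (K+1) (by omega) (by omega) (n+1)]
      have := Ccat_rec (K+1) n (by omega)
      rw [show (K+1+2) = K+3 by omega, show (K+1+1) = K+2 by omega] at this
      rw [this, show ((n+1:ℕ):ℤ) = (n:ℤ)+1 by push_cast; ring]

noncomputable def gseq (k : ℕ) (n : ℕ) : ℚ := coeff n ((1 - X * catQ) ^ (2*k+1))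

lemma gseq_zero (k : ℕ) : gseq k 0 = 1 := by
  simp [gseq, coeff_zero_eq_constantCoeff, map_pow]

lemma gseq_conv (k : ℕ) (hk : 1 ≤ k) (n : ℕ) :
    ∑ t ∈ Finset.range (n+1), gseq k t * Ccat (2*k+1) ((n:ℤ) - t)
      = if n = 0 then 1 else 0 := by
  have hGA : (1 - X*catQ)^(2*k+1) * catQ^(2*k+1) = 1 := by
    rw [← mul_pow, catQ_unit, one_pow]
  have h := congrArg (coeff n) hGA
  rw [coeff_mul, Finset.Nat.sum_antidiagonal_eq_sum_range_succ_mk, coeff_one] at h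
  rw [← h]
  apply Finset.sum_congr rfl
  intro t ht
  rw [Finset.mem_range] at ht
  rw [coeff_catQ_pow (2*k+1) (by omega) (n - t)]
  have hcast : ((n - t : ℕ) : ℤ) = (n:ℤ) - t := by omega
  rw [hcast]
  rfl

lemma gseq_eq (k : ℕ) (hk : 1 ≤ k) (n : ℕ) (hn : k+1 ≤ n) :
    gseq k n = - Ccat (2*k+1) ((n:ℤ) - (2*k+1)) := by
  have h0 := coeff_pow_add_pow (2*k+1) n (by omega)
  rw [mul_pow] at h0
  rw [map_add, coeff_X_pow_mul'] at h0
  by_cases h : 2*k+1 ≤ n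
  · rw [if_pos h, coeff_catQ_pow (2*k+1) (by omega)] at h0
    have hcast : ((n - (2*k+1) : ℕ) : ℤ) = (n:ℤ) - (2*k+1) := by omega
    rw [hcast] at h0
    have : gseq k n = coeff n ((1 - X * catQ) ^ (2*k+1)) := rfl
    rw [this]
    push_cast at h0 ⊢
    linarith
  · rw [if_neg h] at h0
    rw [Ccat_neg _ _ (by push_cast; omega)]
    have : gseq k n = coeff n ((1 - X * catQ) ^ (2*k+1)) := rfl
    rw [this]
    linarith

lemma det_revId : ∀ n : ℕ,
    (Matrix.of fun i j : Fin n => if (i:ℕ) + (j:ℕ) = n - 1 then (1:ℚ) else 0).det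
      = (-1:ℚ)^(n.choose 2) := by
  intro n
  induction n with
  | zero => simp [Matrix.det_fin_zero]
  | succ n ih =>
    rw [Matrix.det_succ_row_zero]
    rw [Finset.sum_eq_single (Fin.last n)]
    · have hA : (Matrix.of fun i j : Fin (n+1) =>
          if (i:ℕ)+(j:ℕ) = n+1-1 then (1:ℚ) else 0) 0 (Fin.last n) = 1 := by
        simp
      rw [hA]
      have hsub : ((Matrix.of fun i j : Fin (n+1) =>
          if (i:ℕ)+(j:ℕ) = n+1-1 then (1:ℚ) else 0).submatrix Fin.succ
            (Fin.last n).succAbove)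
          = (Matrix.of fun i j : Fin n => if (i:ℕ)+(j:ℕ) = n - 1 then (1:ℚ) else 0) := by
        ext i j
        have hi := i.isLt
        have hj := j.isLt
        simp only [Matrix.submatrix_apply, Fin.succAbove_last, Matrix.of_apply,
          Fin.val_succ, Fin.coe_castSucc]
        by_cases h : (i:ℕ)+(j:ℕ) = n - 1
        · rw [if_pos (by omega), if_pos h]
        · rw [if_neg (by omega), if_neg h]
      rw [hsub, ih]
      have hch : (n+1).choose 2 = n + n.choose 2 := by
        rw [Nat.choose_succ_succ, Nat.choose_one_right]
      rw [hch, pow_add, Fin.val_last]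
      ring
    · intro j _ hj
      have : (Matrix.of fun i j : Fin (n+1) =>
          if (i:ℕ)+(j:ℕ) = n+1-1 then (1:ℚ) else 0) 0 j = 0 := by
        have hj' : (j:ℕ) ≠ n := by
          intro hc
          exact hj (Fin.ext (by simp [hc]))
        simp [hj']
      rw [this]
      ring
    · intro h
      exact absurd (Finset.mem_univ _) h

lemma conv_unit (k : ℕ) (hk : 1 ≤ k) (i : ℕ) (m : ℤ) (hm : m ≤ 0) :
    ∑ t ∈ Finset.range (i+1), gseq k t * Ccat (2*k+1) ((i:ℤ) - t + m)
      = if (i:ℤ) + m = 0 then 1 else 0 := by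
  by_cases hi : (i:ℤ) + m < 0
  · rw [if_neg (by omega)]
    apply Finset.sum_eq_zero
    intro t ht
    rw [Ccat_neg _ _ (by omega)]
    ring
  · push_neg at hi
    set d : ℕ := (-m).toNat with hd
    have hdm : m = -(d:ℤ) := by omega
    have hdi : d ≤ i := by omega
    have hz : ∀ t ∈ Finset.range (i+1), t ∉ Finset.range (i-d+1) →
        gseq k t * Ccat (2*k+1) ((i:ℤ) - t + m) = 0 := by
      intro t ht ht'
      rw [Finset.mem_range] at ht ht'
      rw [Ccat_neg _ _ (by omega)]
      ring
    rw [← Finset.sum_subset (Finset.range_subset_range.mpr (by omega : i-d+1 ≤ i+1)) hz]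
    have hF := gseq_conv k hk (i - d)
    have hcongr : ∑ t ∈ Finset.range (i-d+1), gseq k t * Ccat (2*k+1) ((i:ℤ) - t + m)
        = ∑ t ∈ Finset.range (i-d+1), gseq k t * Ccat (2*k+1) (((i-d : ℕ):ℤ) - t) := by
      apply Finset.sum_congr rfl
      intro t ht
      rw [show (i:ℤ) - t + m = ((i-d:ℕ):ℤ) - t by omega]
    rw [hcongr, hF]
    by_cases h0 : i - d = 0
    · rw [if_pos h0, if_pos (by omega)]
    · rw [if_neg h0, if_neg (by omega)]

lemma conv_tail (k : ℕ) (hk : 1 ≤ k) (i : ℕ) (m : ℤ) (hm : 1 ≤ m) (hik : k ≤ i) :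
    ∑ t ∈ Finset.range (i+1), gseq k t * Ccat (2*k+1) ((i:ℤ) - t + m)
      = ∑ r ∈ Finset.range (m.toNat),
          Ccat (2*k+1) ((i:ℤ) + m - (2*k+1) - r) * Ccat (2*k+1) (r:ℤ) := by
  set n : ℕ := ((i:ℤ) + m).toNat with hndef
  have hn : (n:ℤ) = (i:ℤ) + m := by omega
  have hfull := gseq_conv k hk n
  rw [if_neg (by omega)] at hfull
  have hsplit : ∑ t ∈ Finset.range (n+1), gseq k t * Ccat (2*k+1) ((n:ℤ) - t)
      = (∑ t ∈ Finset.range (i+1), gseq k t * Ccat (2*k+1) ((n:ℤ) - t))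
        + ∑ t ∈ Finset.Ico (i+1) (n+1), gseq k t * Ccat (2*k+1) ((n:ℤ) - t) := by
    rw [Finset.range_eq_Ico, Finset.range_eq_Ico]
    exact (Finset.sum_Ico_consecutive (fun t => gseq k t * Ccat (2*k+1) ((n:ℤ) - t)) (by omega : 0 ≤ i+1) (by omega : i+1 ≤ n+1)).symm
  have hLHS : ∑ t ∈ Finset.range (i+1), gseq k t * Ccat (2*k+1) ((i:ℤ) - t + m)
      = ∑ t ∈ Finset.range (i+1), gseq k t * Ccat (2*k+1) ((n:ℤ) - t) := by
    apply Finset.sum_congr rfl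
    intro t ht
    rw [show (i:ℤ) - t + m = (n:ℤ) - t by omega]
  have hre : ∑ t ∈ Finset.Ico (i+1) (n+1), gseq k t * Ccat (2*k+1) ((n:ℤ) - t)
      = - ∑ r ∈ Finset.range (m.toNat),
          Ccat (2*k+1) ((i:ℤ) + m - (2*k+1) - r) * Ccat (2*k+1) (r:ℤ) := by
    have h1 : ∑ t ∈ Finset.Ico (i+1) (n+1), gseq k t * Ccat (2*k+1) ((n:ℤ) - t)
        = ∑ t ∈ Finset.Ico (i+1) (n+1),
            -(Ccat (2*k+1) ((i:ℤ) + m - (2*k+1) - ((n:ℤ) - t)) * Ccat (2*k+1) ((n:ℤ) - t)) := by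
      apply Finset.sum_congr rfl
      intro t ht
      rw [Finset.mem_Ico] at ht
      rw [gseq_eq k hk t (by omega)]
      rw [show (i:ℤ) + m - (2*k+1) - ((n:ℤ) - t) = (t:ℤ) - (2*k+1) by omega]
      ring
    rw [h1, Finset.sum_neg_distrib, neg_inj]
    apply Finset.sum_nbij' (fun t => n - t) (fun r => n - r)
    · intro t ht
      rw [Finset.mem_Ico] at ht
      rw [Finset.mem_range]
      omega
    · intro r hr
      rw [Finset.mem_range] at hr
      rw [Finset.mem_Ico]
      omega
    · intro t ht
      rw [Finset.mem_Ico] at ht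
      omega
    · intro r hr
      rw [Finset.mem_range] at hr
      omega
    · intro t ht
      rw [Finset.mem_Ico] at ht
      rw [show ((n - t : ℕ):ℤ) = (n:ℤ) - t by omega]
  rw [hLHS]
  linarith [hsplit, hfull, hre]

/-- The Hankel determinant `D_{K,M}(N) = det((C_{K,i+j+M}))_{i,j=0}^{N-1}`
(equal to `1` for `N = 0`). -/
noncomputable def Dcat (K : ℕ) (M : ℤ) (N : ℕ) : ℚ :=
  Matrix.det (Matrix.of fun i j : Fin N => Ccat K ((i : ℤ) + (j : ℤ) + M))

lemma step (k : ℕ) (hk : 1 ≤ k) (M : ℤ) (hM : M ≤ 1 - (k:ℤ)) (c N' : ℕ) (hc : (c:ℤ) = -M) :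
    Dcat (2*k+1) M (c+1+N')
      = (-1:ℚ)^((c+1).choose 2) * Dcat (2*k+1) (2 - M - (2*k+1)) N' := by
  classical
  have hck : (k:ℤ) - 1 ≤ (c:ℤ) := by omega
  set N : ℕ := c+1+N' with hNdef
  set M₁ : ℤ := 2 - M - (2*k+1) with hM1def
  set H : Matrix (Fin N) (Fin N) ℚ :=
    Matrix.of (fun i j : Fin N => Ccat (2*k+1) ((i : ℤ) + (j : ℤ) + M)) with hH
  set L : Matrix (Fin N) (Fin N) ℚ :=
    Matrix.of (fun i s : Fin N =>
      if (s:ℕ) ≤ (i:ℕ) then gseq k ((i:ℕ) - (s:ℕ)) else 0) with hLdef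
  have hLtri : L.BlockTriangular OrderDual.toDual := by
    intro i j hij
    have hij' : (i:ℕ) < (j:ℕ) := hij
    simp only [hLdef, Matrix.of_apply]
    rw [if_neg (by omega)]
  have hLdet : L.det = 1 := by
    rw [Matrix.det_of_lowerTriangular L hLtri]
    have hd : ∀ i : Fin N, L i i = 1 := by
      intro i
      simp only [hLdef, Matrix.of_apply]
      rw [if_pos le_rfl]
      simpa using gseq_zero k
    rw [Finset.prod_congr rfl (fun i _ => hd i)]
    simp
  have hentry : ∀ i j : Fin N, (L * H) i j
      = ∑ t ∈ Finset.range ((i:ℕ)+1),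
          gseq k t * Ccat (2*k+1) (((i:ℕ):ℤ) - t + (((j:ℕ):ℤ) + M)) := by
    intro i j
    rw [Matrix.mul_apply]
    have h1 : ∑ s : Fin N, L i s * H s j
        = ∑ s ∈ Finset.range N,
            (if s ≤ (i:ℕ) then gseq k ((i:ℕ) - s) else 0)
              * Ccat (2*k+1) ((s:ℤ) + (((j:ℕ):ℤ)) + M) := by
      rw [← Fin.sum_univ_eq_sum_range (fun s =>
        (if s ≤ (i:ℕ) then gseq k ((i:ℕ) - s) else 0)
          * Ccat (2*k+1) ((s:ℤ) + (((j:ℕ):ℤ)) + M)) N]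
      rfl
    rw [h1]
    have h2 : ∀ s ∈ Finset.range N, s ∉ Finset.range ((i:ℕ)+1) →
        (if s ≤ (i:ℕ) then gseq k ((i:ℕ) - s) else 0)
          * Ccat (2*k+1) ((s:ℤ) + (((j:ℕ):ℤ)) + M) = 0 := by
      intro s _ hs
      rw [Finset.mem_range] at hs
      rw [if_neg (by omega)]
      ring
    rw [← Finset.sum_subset (Finset.range_subset_range.mpr (by omega : (i:ℕ)+1 ≤ N)) h2]
    have h3 : ∑ s ∈ Finset.range ((i:ℕ)+1),
        (if s ≤ (i:ℕ) then gseq k ((i:ℕ) - s) else 0)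
          * Ccat (2*k+1) ((s:ℤ) + (((j:ℕ):ℤ)) + M)
        = ∑ s ∈ Finset.range ((i:ℕ)+1),
            (fun t => gseq k t * Ccat (2*k+1) (((i:ℕ):ℤ) - t + (((j:ℕ):ℤ) + M)))
              ((i:ℕ) - s) := by
      apply Finset.sum_congr rfl
      intro s hs
      rw [Finset.mem_range] at hs
      rw [if_pos (by omega)]
      simp only []
      rw [show ((i:ℕ):ℤ) - ((i:ℕ) - s : ℕ) + (((j:ℕ):ℤ) + M)
          = (s:ℤ) + (((j:ℕ):ℤ)) + M by omega]
    rw [h3]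
    have h4 := Finset.sum_range_reflect
      (fun t => gseq k t * Ccat (2*k+1) (((i:ℕ):ℤ) - t + (((j:ℕ):ℤ) + M))) ((i:ℕ)+1)
    have h5 : ∀ s ∈ Finset.range ((i:ℕ)+1),
        (fun t => gseq k t * Ccat (2*k+1) (((i:ℕ):ℤ) - t + (((j:ℕ):ℤ) + M))) ((i:ℕ) - s)
        = (fun t => gseq k t * Ccat (2*k+1) (((i:ℕ):ℤ) - t + (((j:ℕ):ℤ) + M))) ((i:ℕ)+1-1-s) := by
      intro s hs
      rw [show (i:ℕ)+1-1-s = (i:ℕ)-s by omega]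
    rw [Finset.sum_congr rfl h5, h4]
  set J : Matrix (Fin (c+1)) (Fin (c+1)) ℚ :=
    Matrix.of (fun i j => if (i:ℕ) + (j:ℕ) = (c+1) - 1 then (1:ℚ) else 0) with hJ
  set B : Matrix (Fin (c+1)) (Fin N') ℚ :=
    Matrix.of (fun i j => (L * H) (Fin.castAdd N' i) (Fin.natAdd (c+1) j)) with hB
  set E : Matrix (Fin N') (Fin N') ℚ :=
    Matrix.of (fun i j => ∑ r ∈ Finset.range ((j:ℕ)+1),
      Ccat (2*k+1) (((i:ℕ):ℤ) + ((j:ℕ):ℤ) + M₁ - r) * Ccat (2*k+1) (r:ℤ)) with hE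
  have hblock : L * H
      = (Matrix.fromBlocks J B 0 E).submatrix finSumFinEquiv.symm finSumFinEquiv.symm := by
    ext i j
    rw [Matrix.submatrix_apply]
    induction i using Fin.addCases with
    | left i =>
      induction j using Fin.addCases with
      | left j =>
        rw [finSumFinEquiv_symm_apply_castAdd, finSumFinEquiv_symm_apply_castAdd,
          Matrix.fromBlocks_apply₁₁, hentry]
        have hi := i.isLt
        have hj := j.isLt
        have := conv_unit k hk ((Fin.castAdd N' i : Fin N):ℕ)
          ((((Fin.castAdd N' j : Fin N):ℕ):ℤ) + M) (by simp [Fin.coe_castAdd]; omega)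
        rw [this]
        simp only [hJ, Matrix.of_apply, Fin.coe_castAdd]
        by_cases hcase : (i:ℕ) + (j:ℕ) = (c+1) - 1
        · rw [if_pos (by omega), if_pos hcase]
        · rw [if_neg (by omega), if_neg hcase]
      | right j =>
        rw [finSumFinEquiv_symm_apply_castAdd, finSumFinEquiv_symm_apply_natAdd,
          Matrix.fromBlocks_apply₁₂]
        rfl
    | right i =>
      induction j using Fin.addCases with
      | left j =>
        rw [finSumFinEquiv_symm_apply_natAdd, finSumFinEquiv_symm_apply_castAdd,
          Matrix.fromBlocks_apply₂₁, hentry]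
        have hi := i.isLt
        have hj := j.isLt
        have := conv_unit k hk ((Fin.natAdd (c+1) i : Fin N):ℕ)
          ((((Fin.castAdd N' j : Fin N):ℕ):ℤ) + M) (by simp [Fin.coe_castAdd]; omega)
        rw [this]
        rw [if_neg (by simp [Fin.coe_natAdd, Fin.coe_castAdd]; omega)]
        simp
      | right j =>
        rw [finSumFinEquiv_symm_apply_natAdd, finSumFinEquiv_symm_apply_natAdd,
          Matrix.fromBlocks_apply₂₂, hentry]
        have hi := i.isLt
        have hj := j.isLt
        have hco : ((Fin.natAdd (c+1) i : Fin N):ℕ) = c+1+(i:ℕ) := rfl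
        have hco2 : ((Fin.natAdd (c+1) j : Fin N):ℕ) = c+1+(j:ℕ) := rfl
        rw [hco, hco2]
        have hm : (1:ℤ) ≤ ((c+1+(j:ℕ):ℕ):ℤ) + M := by push_cast; omega
        have hik : k ≤ c+1+(i:ℕ) := by omega
        have := conv_tail k hk (c+1+(i:ℕ)) (((c+1+(j:ℕ):ℕ):ℤ) + M) hm hik
        rw [this]
        simp only [hE, Matrix.of_apply]
        have htn : ((((c+1+(j:ℕ):ℕ)):ℤ) + M).toNat = (j:ℕ)+1 := by push_cast; omega
        rw [htn]
        apply Finset.sum_congr rfl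
        intro r hr
        rw [show (((c+1+(i:ℕ):ℕ)):ℤ) + ((((c+1+(j:ℕ):ℕ)):ℤ) + M) - (2*k+1) - r
          = ((i:ℕ):ℤ) + ((j:ℕ):ℤ) + M₁ - r by push_cast; omega]
  set H₁ : Matrix (Fin N') (Fin N') ℚ :=
    Matrix.of (fun i j : Fin N' => Ccat (2*k+1) ((i : ℤ) + (j : ℤ) + M₁)) with hH₁
  set U : Matrix (Fin N') (Fin N') ℚ :=
    Matrix.of (fun s j : Fin N' =>
      if (s:ℕ) ≤ (j:ℕ) then Ccat (2*k+1) (((j:ℕ):ℤ) - ((s:ℕ):ℤ)) else 0) with hU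
  have hUtri : U.BlockTriangular id := by
    intro s j hsj
    have : (j:ℕ) < (s:ℕ) := hsj
    simp only [hU, Matrix.of_apply]
    rw [if_neg (by omega)]
  have hUdet : U.det = 1 := by
    rw [Matrix.det_of_upperTriangular hUtri]
    have hd : ∀ i : Fin N', U i i = 1 := by
      intro i
      simp only [hU, Matrix.of_apply]
      rw [if_pos le_rfl, show ((i:ℕ):ℤ) - ((i:ℕ):ℤ) = 0 by ring, Ccat_zero _ (by omega)]
    rw [Finset.prod_congr rfl (fun i _ => hd i)]
    simp
  have hEdecomp : E = H₁ * U := by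
    ext i j
    rw [Matrix.mul_apply]
    have h1 : ∑ s : Fin N', H₁ i s * U s j
        = ∑ s ∈ Finset.range N',
            Ccat (2*k+1) (((i:ℕ):ℤ) + (s:ℤ) + M₁)
              * (if s ≤ (j:ℕ) then Ccat (2*k+1) (((j:ℕ):ℤ) - (s:ℤ)) else 0) := by
      rw [← Fin.sum_univ_eq_sum_range (fun s =>
        Ccat (2*k+1) (((i:ℕ):ℤ) + (s:ℤ) + M₁)
          * (if s ≤ (j:ℕ) then Ccat (2*k+1) (((j:ℕ):ℤ) - (s:ℤ)) else 0)) N']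
      rfl
    rw [h1]
    have h2 : ∀ s ∈ Finset.range N', s ∉ Finset.range ((j:ℕ)+1) →
        Ccat (2*k+1) (((i:ℕ):ℤ) + (s:ℤ) + M₁)
          * (if s ≤ (j:ℕ) then Ccat (2*k+1) (((j:ℕ):ℤ) - (s:ℤ)) else 0) = 0 := by
      intro s _ hs
      rw [Finset.mem_range] at hs
      rw [if_neg (by omega)]
      ring
    rw [← Finset.sum_subset (Finset.range_subset_range.mpr (by omega : (j:ℕ)+1 ≤ N')) h2]
    have h3 : ∑ s ∈ Finset.range ((j:ℕ)+1),
        Ccat (2*k+1) (((i:ℕ):ℤ) + (s:ℤ) + M₁)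
          * (if s ≤ (j:ℕ) then Ccat (2*k+1) (((j:ℕ):ℤ) - (s:ℤ)) else 0)
        = ∑ s ∈ Finset.range ((j:ℕ)+1),
            (fun r : ℕ => Ccat (2*k+1) (((i:ℕ):ℤ) + ((j:ℕ):ℤ) + M₁ - (r:ℤ))
              * Ccat (2*k+1) ((r:ℤ))) ((j:ℕ)+1-1-s) := by
      apply Finset.sum_congr rfl
      intro s hs
      rw [Finset.mem_range] at hs
      rw [if_pos (by omega)]
      show _ = Ccat (2*k+1) (((i:ℕ):ℤ) + ((j:ℕ):ℤ) + M₁ - (((j:ℕ)+1-1-s : ℕ):ℤ))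
          * Ccat (2*k+1) ((((j:ℕ)+1-1-s : ℕ)):ℤ)
      rw [show ((i:ℕ):ℤ) + ((j:ℕ):ℤ) + M₁ - (((j:ℕ)+1-1-s : ℕ):ℤ)
          = ((i:ℕ):ℤ) + (s:ℤ) + M₁ by omega,
        show ((((j:ℕ)+1-1-s : ℕ)):ℤ) = ((j:ℕ):ℤ) - (s:ℤ) by omega]
    rw [h3, Finset.sum_range_reflect
      (fun r : ℕ => Ccat (2*k+1) (((i:ℕ):ℤ) + ((j:ℕ):ℤ) + M₁ - (r:ℤ))
        * Ccat (2*k+1) ((r:ℤ))) ((j:ℕ)+1)]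
    rfl
  have hDN : Dcat (2*k+1) M (c+1+N') = H.det := rfl
  have hDN' : Dcat (2*k+1) (2 - M - (2*k+1)) N' = H₁.det := by
    rw [Dcat, hH₁, hM1def]
  rw [hDN, hDN']
  calc H.det = (L.det) * H.det := by rw [hLdet, one_mul]
    _ = (L * H).det := (Matrix.det_mul L H).symm
    _ = (Matrix.fromBlocks J B 0 E).det := by
        rw [hblock, Matrix.det_submatrix_equiv_self]
    _ = J.det * E.det := Matrix.det_fromBlocks_zero₂₁ J B E
    _ = (-1:ℚ)^((c+1).choose 2) * E.det := by rw [← det_revId (c+1)]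
    _ = (-1:ℚ)^((c+1).choose 2) * H₁.det := by
        rw [hEdecomp, Matrix.det_mul, hUdet, mul_one]

lemma step1 (k : ℕ) (hk : 1 ≤ k) (N' : ℕ) :
    Dcat (2*k+1) (1 - (k:ℤ)) (k + N')
      = (-1:ℚ)^(k.choose 2) * Dcat (2*k+1) (-(k:ℤ)) N' := by
  have h := step k hk (1 - (k:ℤ)) (by omega) (k-1) N' (by omega)
  rw [show (k-1)+1+N' = k+N' by omega, show (k-1)+1 = k by omega,
    show 2 - (1-(k:ℤ)) - (2*(k:ℤ)+1) = -(k:ℤ) by ring] at h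
  exact h

lemma step2 (k : ℕ) (hk : 1 ≤ k) (N' : ℕ) :
    Dcat (2*k+1) (-(k:ℤ)) (k+1+N')
      = (-1:ℚ)^((k+1).choose 2) * Dcat (2*k+1) (1 - (k:ℤ)) N' := by
  have h := step k hk (-(k:ℤ)) (by omega) k N' (by omega)
  rw [show 2 - (-(k:ℤ)) - (2*(k:ℤ)+1) = 1 - (k:ℤ) by ring] at h
  exact h

lemma choose_sq (k : ℕ) : k.choose 2 + (k+1).choose 2 = k*k := by
  induction k with
  | zero => rfl
  | succ k ih =>
    have e1 : (k+1+1).choose 2 = (k+1) + (k+1).choose 2 := by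
      rw [Nat.choose_succ_succ (k+1) 1, Nat.choose_one_right]
    have e2 : (k+1).choose 2 = k + k.choose 2 := by
      rw [Nat.choose_succ_succ k 1, Nat.choose_one_right]
    have : (k+1)*(k+1) = k*k + 2*k + 1 := by ring
    omega

lemma neg_one_pow_sq (k : ℕ) : (-1:ℚ)^(k*k) = (-1:ℚ)^k := by
  rw [pow_mul]
  rcases Nat.even_or_odd k with he | ho
  · rw [he.neg_one_pow]
    simp
  · rw [ho.neg_one_pow]
    exact ho.neg_one_pow

lemma Dk_period (k : ℕ) (hk : 1 ≤ k) (N : ℕ) :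
    Dcat (2*k+1) (1 - (k:ℤ)) (N + (2*k+1))
      = (-1:ℚ)^k * Dcat (2*k+1) (1 - (k:ℤ)) N := by
  have h1 := step1 k hk (k+1+N)
  rw [show k + (k+1+N) = N + (2*k+1) by omega] at h1
  have h2 := step2 k hk N
  rw [h1, h2, ← mul_assoc, ← pow_add, choose_sq, neg_one_pow_sq]

lemma Dk_zero (k : ℕ) : Dcat (2*k+1) (1 - (k:ℤ)) 0 = 1 := Matrix.det_fin_zero

lemma Dk_k (k : ℕ) (hk : 1 ≤ k) :
    Dcat (2*k+1) (1 - (k:ℤ)) k = (-1:ℚ)^(k.choose 2) := by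
  have h := step1 k hk 0
  rw [show Dcat (2*k+1) (-(k:ℤ)) 0 = 1 from Matrix.det_fin_zero, mul_one] at h
  simpa using h

lemma Dk_zero_small (k : ℕ) (hk : 1 ≤ k) (N : ℕ) (h1 : 1 ≤ N) (h2 : N + 1 ≤ k) :
    Dcat (2*k+1) (1 - (k:ℤ)) N = 0 := by
  apply Matrix.det_eq_zero_of_row_eq_zero ⟨0, by omega⟩
  intro j
  have hj := j.isLt
  exact Ccat_neg _ _ (by simp; omega)

lemma Dk_mid (k : ℕ) (hk : 1 ≤ k) (N' : ℕ) (h1 : 1 ≤ N') (h2 : N' ≤ k) :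
    Dcat (2*k+1) (1 - (k:ℤ)) (k + N') = 0 := by
  rw [step1 k hk N']
  have h : Dcat (2*k+1) (-(k:ℤ)) N' = 0 := by
    apply Matrix.det_eq_zero_of_row_eq_zero ⟨0, by omega⟩
    intro j
    have hj := j.isLt
    exact Ccat_neg _ _ (by simp; omega)
  rw [h, mul_zero]

lemma Dk_form1 (k : ℕ) (hk : 1 ≤ k) (n : ℕ) :
    Dcat (2*k+1) (1 - (k:ℤ)) ((2*k+1)*n) = (-1:ℚ)^(k*n) := by
  induction n with
  | zero => simpa using Dk_zero k
  | succ n ih =>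
    have h := Dk_period k hk ((2*k+1)*n)
    rw [show (2*k+1)*n + (2*k+1) = (2*k+1)*(n+1) by ring] at h
    rw [h, ih, ← pow_add, show k + k*n = k*(n+1) by ring]

lemma Dk_form2 (k : ℕ) (hk : 1 ≤ k) (n : ℕ) :
    Dcat (2*k+1) (1 - (k:ℤ)) ((2*k+1)*n + k) = (-1:ℚ)^(k*n + k.choose 2) := by
  induction n with
  | zero => simpa using Dk_k k hk
  | succ n ih =>
    have h := Dk_period k hk ((2*k+1)*n + k)
    rw [show (2*k+1)*n + k + (2*k+1) = (2*k+1)*(n+1) + k by ring] at h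
    rw [h, ih, ← pow_add, show k + (k*n + k.choose 2) = k*(n+1) + k.choose 2 by ring]

lemma Dk_other (k : ℕ) (hk : 1 ≤ k) : ∀ N, 0 < N → (¬ ∃ n : ℕ, N = (2*k+1)*n) →
    (¬ ∃ n : ℕ, N = (2*k+1)*n + k) → Dcat (2*k+1) (1 - (k:ℤ)) N = 0 := by
  intro N
  induction N using Nat.strong_induction_on with
  | _ N ih =>
    intro hN hf1 hf2
    by_cases hsmall : N ≤ 2*k
    · by_cases hlek : N + 1 ≤ k
      · exact Dk_zero_small k hk N hN hlek
      · have hNk : N ≠ k := by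
          intro h
          exact hf2 ⟨0, by omega⟩
        have h := Dk_mid k hk (N - k) (by omega) (by omega)
        rw [show k + (N-k) = N by omega] at h
        exact h
    · have hNbig : ¬ N = 2*k+1 := by
        intro h
        exact hf1 ⟨1, by omega⟩
      have hper := Dk_period k hk (N - (2*k+1))
      rw [show (N - (2*k+1)) + (2*k+1) = N by omega] at hper
      have hz : Dcat (2*k+1) (1 - (k:ℤ)) (N - (2*k+1)) = 0 := by
        apply ih _ (by omega) (by omega) ?_ ?_
        · rintro ⟨n, hn⟩
          apply hf1 ⟨n+1, ?_⟩
          have : (2*k+1)*(n+1) = (2*k+1)*n + (2*k+1) := by ring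
          omega
        · rintro ⟨n, hn⟩
          apply hf2 ⟨n+1, ?_⟩
          have : (2*k+1)*(n+1) = (2*k+1)*n + (2*k+1) := by ring
          omega
      rw [hper, hz, mul_zero]

/-- `D_{2k+1,1-k}((2k+1)n) = (-1)^{kn}`, `D_{2k+1,1-k}((2k+1)n+k) = (-1)^{kn+binom(k,2)}`,
and `D_{2k+1,1-k}(N) = 0` for all other positive `N`. -/
theorem stmt10 (k : ℕ) (hk : 0 < k) :
    (∀ n : ℕ, Dcat (2 * k + 1) (1 - (k : ℤ)) ((2 * k + 1) * n) = (-1 : ℚ) ^ (k * n)) ∧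
      (∀ n : ℕ, Dcat (2 * k + 1) (1 - (k : ℤ)) ((2 * k + 1) * n + k) =
          (-1 : ℚ) ^ (k * n + k.choose 2)) ∧
      (∀ N : ℕ, 0 < N → (¬ ∃ n : ℕ, N = (2 * k + 1) * n) →
        (¬ ∃ n : ℕ, N = (2 * k + 1) * n + k) →
        Dcat (2 * k + 1) (1 - (k : ℤ)) N = 0) := by
  exact ⟨Dk_form1 k hk, Dk_form2 k hk, Dk_other k hk⟩
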